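/- For n ≥ 3, 1 < κ < n, 2 ≤ r < s, the set of boundary monomials of the lex-segment complement order ideal O of shape (n,κ,r,s) in degree d, for r+1 ≤ d ≤ s, equals the set of degree-d monomials of front degree exactly 1 (i.e., divisible by exactly one front variable, to the first power). Consequently |∂O_d| = (n−κ)·C(κ−2+d, d−1) for r+1 ≤ d ≤ s. -/

import Mathlib

open Finset

/-- The lex-segment complement order ideal of shape `(n,κ,r,s)`, as a set of
exponent vectors: all monomials of degree `< r`, together with all monomials of
degree `d`, `r ≤ d ≤ s`, in the back variables (indices `i` with `(i:ℕ) ≥ n - κ`). -/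
def shapeO (n κ r s : ℕ) : Set (Fin n →₀ ℕ) :=
  {m | (∑ i, m i) < r ∨
    (r ≤ (∑ i, m i) ∧ (∑ i, m i) ≤ s ∧ ∀ i : Fin n, (i : ℕ) < n - κ → m i = 0)}

/-- The front degree of a monomial: total degree in the front variables. -/
def frontDeg (n κ : ℕ) (m : Fin n →₀ ℕ) : ℕ :=
  ∑ i ∈ univ.filter (fun i : Fin n => (i : ℕ) < n - κ), m i


lemma deg_add (n : ℕ) (a b : Fin n →₀ ℕ) :
    ∑ i, (a + b) i = (∑ i, a i) + ∑ i, b i := by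
  simp [Finsupp.add_apply, Finset.sum_add_distrib]

lemma deg_single (n : ℕ) (α : Fin n) :
    ∑ i, (Finsupp.single α 1 : Fin n →₀ ℕ) i = 1 := by
  simp [Finsupp.single_apply]

lemma frontDeg_add (n κ : ℕ) (a b : Fin n →₀ ℕ) :
    frontDeg n κ (a + b) = frontDeg n κ a + frontDeg n κ b := by
  simp [frontDeg, Finsupp.add_apply, Finset.sum_add_distrib]

lemma frontDeg_single_front (n κ : ℕ) (α : Fin n) (hα : (α : ℕ) < n - κ) :
    frontDeg n κ (Finsupp.single α 1) = 1 := by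
  simp [frontDeg, Finsupp.single_apply, Finset.sum_ite_eq, hα]

lemma frontDeg_single_back (n κ : ℕ) (α : Fin n) (hα : ¬ (α : ℕ) < n - κ) :
    frontDeg n κ (Finsupp.single α 1) = 0 := by
  simp [frontDeg, Finsupp.single_apply, Finset.sum_ite_eq, hα]

lemma frontDeg_eq_zero_iff (n κ : ℕ) (m : Fin n →₀ ℕ) :
    frontDeg n κ m = 0 ↔ ∀ i : Fin n, (i : ℕ) < n - κ → m i = 0 := by
  rw [frontDeg, Finset.sum_eq_zero_iff]
  simp

lemma mem_shapeO_iff (n κ r s : ℕ) (m : Fin n →₀ ℕ) :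
    m ∈ shapeO n κ r s ↔ (∑ i, m i) < r ∨
      (r ≤ (∑ i, m i) ∧ (∑ i, m i) ≤ s ∧ frontDeg n κ m = 0) := by
  rw [shapeO, Set.mem_setOf_eq, frontDeg_eq_zero_iff]

lemma exists_decomp (n κ : ℕ) (m : Fin n →₀ ℕ) (hm : frontDeg n κ m = 1) :
    ∃ (α : Fin n) (t : Fin n →₀ ℕ), (α : ℕ) < n - κ ∧ frontDeg n κ t = 0 ∧
      m = t + Finsupp.single α 1 := by
  obtain ⟨α, hαmem, hα0⟩ : ∃ α ∈ univ.filter (fun i : Fin n => (i : ℕ) < n - κ), m α ≠ 0 := by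
    apply Finset.exists_ne_zero_of_sum_ne_zero
    rw [← frontDeg, hm]; exact one_ne_zero
  have hαfront : (α : ℕ) < n - κ := by simpa using hαmem
  refine ⟨α, m - Finsupp.single α 1, hαfront, ?_, ?_⟩
  · have hdecomp : m = (m - Finsupp.single α 1) + Finsupp.single α 1 := by
      ext i
      rw [Finsupp.add_apply, Finsupp.tsub_apply]
      rcases eq_or_ne i α with rfl | h
      · simp only [Finsupp.single_eq_same]
        omega
      · simp [Finsupp.single_apply, h.symm]
    have := frontDeg_add n κ (m - Finsupp.single α 1) (Finsupp.single α 1)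
    rw [← hdecomp, frontDeg_single_front n κ α hαfront, hm] at this
    omega
  · ext i
    rw [Finsupp.add_apply, Finsupp.tsub_apply]
    rcases eq_or_ne i α with rfl | h
    · simp only [Finsupp.single_eq_same]
      omega
    · simp [Finsupp.single_apply, h.symm]
def embBack (n κ : ℕ) (hκn : κ ≤ n) : Fin κ ↪ Fin n where
  toFun j := ⟨n - κ + j.1, by have := j.2; omega⟩
  inj' a b hab := by
    apply Fin.ext
    have := congrArg Fin.val hab
    simpa using this

lemma mem_range_embBack (n κ : ℕ) (hκn : κ ≤ n) (i : Fin n) :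
    i ∈ Set.range (embBack n κ hκn) ↔ ¬ (i : ℕ) < n - κ := by
  constructor
  · rintro ⟨j, rfl⟩
    show ¬ (n - κ + (j : ℕ)) < n - κ
    omega
  · intro hi
    refine ⟨⟨(i : ℕ) - (n - κ), by have := i.2; omega⟩, ?_⟩
    apply Fin.ext
    show n - κ + ((i : ℕ) - (n - κ)) = (i : ℕ)
    omega

lemma sum_embDomain_back (n κ : ℕ) (hκn : κ ≤ n) (f : Fin κ →₀ ℕ) :
    ∑ i, (Finsupp.embDomain (embBack n κ hκn) f) i = ∑ j, f j := by
  have h1 : ∑ i ∈ univ.map (embBack n κ hκn), (Finsupp.embDomain (embBack n κ hκn) f) i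
      = ∑ i, (Finsupp.embDomain (embBack n κ hκn) f) i := by
    apply Finset.sum_subset (Finset.subset_univ _)
    intro i _ hi
    apply Finsupp.embDomain_notin_range
    rintro ⟨j, rfl⟩
    exact hi (Finset.mem_map.2 ⟨j, Finset.mem_univ _, rfl⟩)
  rw [← h1, Finset.sum_map]
  simp [Finsupp.embDomain_apply]

lemma frontDeg_embDomain_back (n κ : ℕ) (hκn : κ ≤ n) (f : Fin κ →₀ ℕ) :
    (∑ i ∈ univ.filter (fun i : Fin n => (i : ℕ) < n - κ),
      (Finsupp.embDomain (embBack n κ hκn) f) i) = 0 := by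
  apply Finset.sum_eq_zero
  intro i hi
  apply Finsupp.embDomain_notin_range
  rw [mem_range_embBack]
  simp only [Finset.mem_filter, Finset.mem_univ, true_and] at hi
  omega

lemma frontDeg_embDomain_back' (n κ : ℕ) (hκn : κ ≤ n) (f : Fin κ →₀ ℕ) :
    frontDeg n κ (Finsupp.embDomain (embBack n κ hκn) f) = 0 :=
  frontDeg_embDomain_back n κ hκn f

lemma card_sub (κ e : ℕ) :
    Nat.card {f : Fin κ →₀ ℕ // ∑ j, f j = e} = Nat.multichoose κ e := by
  have e1 : {f : Fin κ →₀ ℕ // ∑ j, f j = e} ≃ {P : Fin κ → ℕ // ∑ i, P i = e} :=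
    Finsupp.equivFunOnFinite.subtypeEquiv (fun f => Iff.rfl)
  rw [Nat.card_congr e1, Nat.card_congr (Sym.equivNatSumOfFintype (Fin κ) e).symm,
    Nat.card_eq_fintype_card, Sym.card_sym_eq_multichoose, Fintype.card_fin]

lemma card_front (n c : ℕ) (h : c ≤ n) : Nat.card {i : Fin n // (i : ℕ) < c} = c := by
  have e : {i : Fin n // (i : ℕ) < c} ≃ Fin c :=
    { toFun := fun i => ⟨i.1.1, i.2⟩
      invFun := fun j => ⟨⟨j.1, lt_of_lt_of_le j.2 h⟩, j.2⟩
      left_inv := fun i => rfl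
      right_inv := fun j => rfl }
  rw [Nat.card_congr e, Nat.card_eq_fintype_card, Fintype.card_fin]

lemma card_main (n κ d : ℕ) (hκn : κ ≤ n) (hd : 1 ≤ d) :
    Nat.card {m : Fin n →₀ ℕ // (∑ i, m i) = d ∧ frontDeg n κ m = 1}
      = (n - κ) * Nat.multichoose κ (d - 1) := by
  classical
  set emb := embBack n κ hκn with hemb_def
  let Φ : {α : Fin n // (α : ℕ) < n - κ} × {f : Fin κ →₀ ℕ // ∑ j, f j = d - 1}
      → {m : Fin n →₀ ℕ // (∑ i, m i) = d ∧ frontDeg n κ m = 1} :=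
    fun p => ⟨Finsupp.embDomain emb p.2.1 + Finsupp.single p.1.1 1, by
      constructor
      · rw [deg_add, sum_embDomain_back, deg_single, p.2.2]; omega
      · rw [frontDeg_add, frontDeg_single_front n κ _ p.1.2,
          frontDeg_embDomain_back' n κ hκn p.2.1]⟩
  have hinj : Function.Injective Φ := by
    rintro ⟨⟨α, hα⟩, ⟨f, hf⟩⟩ ⟨⟨β, hβ⟩, ⟨g, hg⟩⟩ h
    have hval : Finsupp.embDomain emb f + Finsupp.single α 1
        = Finsupp.embDomain emb g + Finsupp.single β 1 := congrArg Subtype.val h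
    have hαr : α ∉ Set.range emb := by
      rw [hemb_def, mem_range_embBack]; exact not_not_intro hα
    have hαβ : α = β := by
      by_contra hne
      have happ := DFunLike.congr_fun hval α
      rw [Finsupp.add_apply, Finsupp.add_apply,
        Finsupp.embDomain_notin_range _ _ _ hαr, Finsupp.embDomain_notin_range _ _ _ hαr,
        Finsupp.single_eq_same, Finsupp.single_apply, if_neg (Ne.symm hne)] at happ
      simp at happ
    subst hαβ
    have hfg' : Finsupp.embDomain emb f = Finsupp.embDomain emb g :=
      add_right_cancel hval
    have hfg : f = g := Finsupp.embDomain_injective emb hfg'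
    subst hfg
    rfl
  have hsurj : Function.Surjective Φ := by
    rintro ⟨m, hmd, hmf⟩
    obtain ⟨α, t, hαf, ht0, hmt⟩ := exists_decomp n κ m hmf
    have hsupp : ↑t.support ⊆ Set.range emb := by
      intro i hi
      rw [hemb_def, mem_range_embBack]
      intro hlt
      exact (Finsupp.mem_support_iff.1 hi) ((frontDeg_eq_zero_iff n κ t).1 ht0 i hlt)
    have hemb : Finsupp.embDomain emb (Finsupp.comapDomain emb t emb.injective.injOn) = t :=
      Finsupp.embDomain_comapDomain hsupp
    have hdt : ∑ i, t i = d - 1 := by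
      have h2 := deg_add n t (Finsupp.single α 1)
      rw [← hmt, deg_single, hmd] at h2; omega
    have hfd : ∑ j, (Finsupp.comapDomain emb t emb.injective.injOn) j = d - 1 := by
      have h3 := sum_embDomain_back n κ hκn (Finsupp.comapDomain emb t emb.injective.injOn)
      rw [← hemb_def] at h3
      rw [hemb] at h3
      omega
    refine ⟨⟨⟨α, hαf⟩, ⟨Finsupp.comapDomain emb t emb.injective.injOn, hfd⟩⟩,
      Subtype.ext ?_⟩
    show Finsupp.embDomain emb _ + Finsupp.single α 1 = m
    rw [hemb, ← hmt]
  rw [Nat.card_congr (Equiv.ofBijective Φ ⟨hinj, hsurj⟩).symm, Nat.card_prod,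
    card_front n (n - κ) (Nat.sub_le n κ), card_sub]

/-- for `r+1 ≤ d ≤ s`, the boundary monomials of degree `d` of the
lex-segment complement order ideal of shape `(n,κ,r,s)` are exactly the degree-`d`
monomials of front degree exactly `1`; consequently there are
`(n-κ)·C(κ-2+d, d-1)` of them. -/
theorem stmt11 (n κ r s d : ℕ) (hn : 3 ≤ n) (hκ1 : 1 < κ) (hκn : κ < n)
    (hr : 2 ≤ r) (hrs : r < s) (hd1 : r + 1 ≤ d) (hd2 : d ≤ s) :
    ({m : Fin n →₀ ℕ | m ∉ shapeO n κ r s ∧ (∑ i, m i) = d ∧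
        ∃ (α : Fin n) (t : Fin n →₀ ℕ), t ∈ shapeO n κ r s ∧ m = t + Finsupp.single α 1}
      = {m : Fin n →₀ ℕ | (∑ i, m i) = d ∧ frontDeg n κ m = 1}) ∧
    ∀ F : Finset (Fin n →₀ ℕ),
      (F : Set (Fin n →₀ ℕ)) = {m | (∑ i, m i) = d ∧ frontDeg n κ m = 1} →
      F.card = (n - κ) * Nat.choose (κ - 2 + d) (d - 1) := by
  constructor
  · ext m
    simp only [Set.mem_setOf_eq]
    constructor
    · rintro ⟨hmO, hdeg, α, t, htO, rfl⟩
      refine ⟨hdeg, ?_⟩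
      have hdt : ∑ i, t i = d - 1 := by
        have h2 := deg_add n t (Finsupp.single α 1)
        rw [deg_single] at h2; omega
      have htf : frontDeg n κ t = 0 := by
        rcases (mem_shapeO_iff n κ r s t).1 htO with h | h
        · omega
        · exact h.2.2
      have hfadd := frontDeg_add n κ t (Finsupp.single α 1)
      by_cases hα : (α : ℕ) < n - κ
      · rw [frontDeg_single_front n κ α hα, htf] at hfadd
        omega
      · exfalso
        apply hmO
        rw [mem_shapeO_iff]
        right
        rw [frontDeg_single_back n κ α hα, htf] at hfadd
        exact ⟨by omega, by omega, by omega⟩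
    · rintro ⟨hdeg, hfront⟩
      obtain ⟨α, t, hαf, ht0, hmt⟩ := exists_decomp n κ m hfront
      have hdt : ∑ i, t i = d - 1 := by
        have h2 := deg_add n t (Finsupp.single α 1)
        rw [← hmt, deg_single, hdeg] at h2; omega
      refine ⟨?_, hdeg, α, t, ?_, hmt⟩
      · rw [mem_shapeO_iff]
        push_neg
        refine ⟨by omega, fun _ _ => ?_⟩
        rw [hfront]
        exact one_ne_zero
      · rw [mem_shapeO_iff]
        right
        exact ⟨by omega, by omega, ht0⟩
  · intro F hF
    have h1 : F.card
        = Nat.card {m : Fin n →₀ ℕ // (∑ i, m i) = d ∧ frontDeg n κ m = 1} := by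
      rw [← Set.ncard_coe_finset, hF, ← Nat.card_coe_set_eq]
      rfl
    rw [h1, card_main n κ d (le_of_lt hκn) (by omega), Nat.multichoose_eq]
    congr 2
    omega
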